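/- arXiv:1707.08751 — 3 statements merged into one kernel-verified Lean document; each statement's English description precedes it below -/
import Mathlib

section
/- The following are equivalent: (a) every run r : Run is T-Δ-acceptable; (b) for all r, agents i, j, lists X, and times m: honest r m i and X a T-prefix of ledger r m i imply that for all m' ≥ m + Δ, honest r m' j implies X is a T-prefix of ledger r m' j; (c) for all r, agents i, lists X, and times m: honest r m i and X a T-prefix of ledger r m i imply that for all m' ≥ m + Δ, (E_H TP_X) (r, m') holds; (d) for all r, agents i, lists X, and times m: honest r m i and X a T-prefix of ledger r m i imply that the Δ-□-common knowledge (C TP_X) (r, m) holds. -/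
/-- `X` is a `T`-prefix of `L`: `X` is a prefix of `L` and `X.length + T ≤ L.length`. -/
def TPrefix {Tx : Type*} (T : ℕ) (X L : List Tx) : Prop :=
  X <+: L ∧ X.length + T ≤ L.length

/-- The run `r` of a system is `T`-`Δ`-acceptable. -/
def Acceptable {Run Agent Tx : Type*} (T Δ : ℕ) (honest : Run → ℕ → Agent → Prop)
    (ledger : Run → ℕ → Agent → List Tx) (r : Run) : Prop :=
  ∀ (m m' : ℕ) (i j : Agent) (X : List Tx), m ≤ m' → honest r m i →
    TPrefix T X (ledger r m i) → honest r (m' + Δ) j →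
    TPrefix T X (ledger r (m' + Δ) j)

/-- `q ∼_i p`: agent `i` cannot distinguish the points `q` and `p`
(`i`'s local state is the same at both points, and `i` is present at both). -/
def Sim {Run Agent σ : Type*} (localState : Run → ℕ → Agent → Option σ)
    (i : Agent) (q p : Run × ℕ) : Prop :=
  localState p.1 p.2 i = localState q.1 q.2 i ∧ (localState p.1 p.2 i).isSome

/-- The agent-relative formula `TP_X`: "`X` is a `T`-prefix of my ledger". -/
def TP {Run Agent Tx : Type*} (T : ℕ) (ledger : Run → ℕ → Agent → List Tx)
    (X : List Tx) (p : Run × ℕ) (i : Agent) : Prop :=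
  TPrefix T X (ledger p.1 p.2 i)

/-- `(E_H φ) p`: every agent `j` honest at `p` knows (relative to honesty) its
interpretation of `φ`: for every point `q ∼_j p` at which `j` is honest, `φ q j`. -/
def EH {Run Agent σ : Type*} (honest : Run → ℕ → Agent → Prop)
    (localState : Run → ℕ → Agent → Option σ)
    (φ : Run × ℕ → Agent → Prop) (p : Run × ℕ) : Prop :=
  ∀ j, honest p.1 p.2 j → ∀ q, Sim localState j q p → honest q.1 q.2 j → φ q j

/-- `(○^Δ□ φ) (r, m)`: `φ` holds at `(r, m')` for all `m' ≥ m + Δ`. -/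
def NextBox {Run : Type*} (Δ : ℕ) (φ : Run × ℕ → Prop) (p : Run × ℕ) : Prop :=
  ∀ m', p.2 + Δ ≤ m' → φ (p.1, m')

/-- `Iter Δ honest localState n φ` is `(○^Δ□ ∘ E_H)^{n+1} φ`:
`(○^Δ□ ∘ E_H)^1 φ = ○^Δ□(E_H φ)` and
`(○^Δ□ ∘ E_H)^{n+1} φ = ○^Δ□(E_H ((○^Δ□ ∘ E_H)^n φ))`. -/
def Iter {Run Agent σ : Type*} (Δ : ℕ) (honest : Run → ℕ → Agent → Prop)
    (localState : Run → ℕ → Agent → Option σ) :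
    ℕ → (Run × ℕ → Agent → Prop) → (Run × ℕ → Prop)
  | 0, φ => NextBox Δ (EH honest localState φ)
  | n + 1, φ => NextBox Δ (EH honest localState
      (fun q _ => Iter Δ honest localState n φ q))

/-- `Δ`-`□`-common knowledge among the honest agents:
`(C φ) p := ∀ n ≥ 1, ((○^Δ□ ∘ E_H)^n φ) p`. -/
def CK {Run Agent σ : Type*} (Δ : ℕ) (honest : Run → ℕ → Agent → Prop)
    (localState : Run → ℕ → Agent → Option σ)
    (φ : Run × ℕ → Agent → Prop) (p : Run × ℕ) : Prop :=
  ∀ n : ℕ, Iter Δ honest localState n φ p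

/-- Theorem 4 (characterization of blockchain protocols): the four conditions are
equivalent. -/
theorem blockchain_characterization {Run Agent Tx σ : Type*} (T Δ : ℕ)
    (honest : Run → ℕ → Agent → Prop) (ledger : Run → ℕ → Agent → List Tx)
    (localState : Run → ℕ → Agent → Option σ)
    (hpresent : ∀ (r : Run) (m : ℕ) (i : Agent), honest r m i → localState r m i ≠ none)
    (hledger : ∀ (i : Agent) (q p : Run × ℕ), Sim localState i q p →
      ledger q.1 q.2 i = ledger p.1 p.2 i) :
    List.TFAE
      [ -- (a) every run is T-Δ-acceptable
        (∀ r : Run, Acceptable T Δ honest ledger r),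
        -- (b)
        (∀ (r : Run) (i j : Agent) (X : List Tx) (m : ℕ),
          honest r m i → TPrefix T X (ledger r m i) →
          ∀ m', m + Δ ≤ m' → honest r m' j → TPrefix T X (ledger r m' j)),
        -- (c)
        (∀ (r : Run) (i : Agent) (X : List Tx) (m : ℕ),
          honest r m i → TPrefix T X (ledger r m i) →
          ∀ m', m + Δ ≤ m' → EH honest localState (TP T ledger X) (r, m')),
        -- (d)
        (∀ (r : Run) (i : Agent) (X : List Tx) (m : ℕ),
          honest r m i → TPrefix T X (ledger r m i) →
          CK Δ honest localState (TP T ledger X) (r, m)) ] := by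
  have simRefl : ∀ (j : Agent) (p : Run × ℕ), honest p.1 p.2 j → Sim localState j p p := by
    intro j p hj
    exact ⟨rfl, Option.isSome_iff_ne_none.2 (hpresent _ _ _ hj)⟩
  tfae_have 1 → 2 := by
    intro ha r i j X m hi hX m' hm hj
    have h := ha r m (m' - Δ) i j X (by omega) hi hX
    have : m' - Δ + Δ = m' := by omega
    rw [this] at h
    exact h hj
  tfae_have 2 → 3 := by
    intro hb r i X m hi hX m' hm j hj q hsim hjq
    have hXj : TPrefix T X (ledger r m' j) := hb r i j X m hi hX m' hm hj
    show TPrefix T X (ledger q.1 q.2 j)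
    rw [hledger j q (r, m') hsim]
    exact hXj
  tfae_have 3 → 4 := by
    intro hc
    have key : ∀ n (r : Run) (i : Agent) (X : List Tx) (m : ℕ),
        honest r m i → TPrefix T X (ledger r m i) →
        Iter Δ honest localState n (TP T ledger X) (r, m) := by
      intro n
      induction n with
      | zero =>
        intro r i X m hi hX m' hm
        exact hc r i X m hi hX m' hm
      | succ n ih =>
        intro r i X m hi hX m' hm j hj q hsim hjq
        have hEH := hc r i X m hi hX m' hm
        have hXj : TP T ledger X (r, m') j :=
          hEH j hj (r, m') (simRefl j (r, m') hj) hj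
        have hXq : TPrefix T X (ledger q.1 q.2 j) := by
          have := hledger j q (r, m') hsim
          exact this ▸ hXj
        have := ih q.1 j X q.2 hjq hXq
        exact this
    intro r i X m hi hX n
    exact key n r i X m hi hX
  tfae_have 4 → 1 := by
    intro hd r m m' i j X hm hi hX hj
    have h0 := hd r i X m hi hX 0
    have hEH := h0 (m' + Δ) (by omega)
    exact hEH j hj (r, m' + Δ) (simRefl j (r, m' + Δ) hj) hj
  tfae_finish
end

section
/- The following are equivalent: (b) for all r : Run, agents i, j, lists X, and times m: honest r m i and X a T-prefix of ledger r m i imply that for all m' ≥ m + Δ, honest r m' j implies X is a T-prefix of ledger r m' j; (c) for all r, agents i, lists X, and times m: honest r m i and X a T-prefix of ledger r m i imply that for all m' ≥ m + Δ, (E_H TP_X) (r, m') holds. -/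
/-- Equivalence of conditions (b) and (c) from Theorem 4. -/
theorem blockchain_char_b_iff_c {Run Agent Tx σ : Type*} (T Δ : ℕ)
    (honest : Run → ℕ → Agent → Prop) (ledger : Run → ℕ → Agent → List Tx)
    (localState : Run → ℕ → Agent → Option σ)
    (hpresent : ∀ (r : Run) (m : ℕ) (i : Agent), honest r m i → localState r m i ≠ none)
    (hledger : ∀ (i : Agent) (q p : Run × ℕ), Sim localState i q p →
      ledger q.1 q.2 i = ledger p.1 p.2 i) :
    (∀ (r : Run) (i j : Agent) (X : List Tx) (m : ℕ),
        honest r m i → TPrefix T X (ledger r m i) →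
        ∀ m', m + Δ ≤ m' → honest r m' j → TPrefix T X (ledger r m' j)) ↔
      (∀ (r : Run) (i : Agent) (X : List Tx) (m : ℕ),
        honest r m i → TPrefix T X (ledger r m i) →
        ∀ m', m + Δ ≤ m' → EH honest localState (TP T ledger X) (r, m')) := by
  constructor
  · intro hb r i X m hi hX m' hm' j hj q hsim hq
    have heq := hledger j q (r, m') hsim
    unfold TP
    rw [heq]
    exact hb r i j X m hi hX m' hm' hj
  · intro hc r i j X m hi hX m' hm' hj
    have hsome : (localState r m' j).isSome := by
      have := hpresent r m' j hj
      exact Option.isSome_iff_ne_none.mpr this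
    exact hc r i X m hi hX m' hm' j hj (r, m') ⟨rfl, hsome⟩ hj
end

section
/- The following are equivalent: (c) for all r : Run, agents i, lists X, and times m: honest r m i and X a T-prefix of ledger r m i imply that for all m' ≥ m + Δ, (E_H TP_X) (r, m') holds; (d) for all r, agents i, lists X, and times m: honest r m i and X a T-prefix of ledger r m i imply that the Δ-□-common knowledge (C TP_X) (r, m) holds. -/
/-- Equivalence of conditions (c) and (d) from Theorem 4. -/
theorem blockchain_char_c_iff_d {Run Agent Tx σ : Type*} (T Δ : ℕ)
    (honest : Run → ℕ → Agent → Prop) (ledger : Run → ℕ → Agent → List Tx)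
    (localState : Run → ℕ → Agent → Option σ)
    (hpresent : ∀ (r : Run) (m : ℕ) (i : Agent), honest r m i → localState r m i ≠ none)
    (hledger : ∀ (i : Agent) (q p : Run × ℕ), Sim localState i q p →
      ledger q.1 q.2 i = ledger p.1 p.2 i) :
    (∀ (r : Run) (i : Agent) (X : List Tx) (m : ℕ),
        honest r m i → TPrefix T X (ledger r m i) →
        ∀ m', m + Δ ≤ m' → EH honest localState (TP T ledger X) (r, m')) ↔
      (∀ (r : Run) (i : Agent) (X : List Tx) (m : ℕ),
        honest r m i → TPrefix T X (ledger r m i) →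
        CK Δ honest localState (TP T ledger X) (r, m)) := by
  constructor
  · intro hc r i X m hi hX n
    induction n generalizing r i m with
    | zero => exact hc r i X m hi hX
    | succ n ih =>
      intro m' hm' j hj q hsim hjq
      exact ih q.1 j q.2 hjq (hc r i X m hi hX m' hm' j hj q hsim hjq)
  · intro hd r i X m hi hX
    exact hd r i X m hi hX 0
end
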